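/- arXiv:1305.5492 — 2 statements merged into one kernel-verified Lean document; each statement's English description precedes it below -/
import Mathlib

section
/- Let n ≥ 1 be an integer. (a) For every integer ℓ ≥ 1, λ(nℓ)·log(nℓ) − λ(n)·λ(ℓ)·log(ℓ) = λ(nℓ)·log(n); in particular the absolute value of this quantity is at most log(n) for all ℓ, so the matrix entries of the twisted commutator D·μ_n − σ(μ_n)·D of the Bost–Connes σ-spectral triple are bounded. (b) If moreover λ(n) = −1, then for every C there exists an integer ℓ ≥ 1 with |λ(nℓ)·log(nℓ) − λ(ℓ)·log(ℓ)| > C; that is, the matrix entries of the ordinary commutator [D, μ_n] are unbounded in ℓ. -/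
open ArithmeticFunction
open scoped ArithmeticFunction.Omega

/-- (a) For `λ(n) = (-1)^Ω(n)` and `ℓ ≥ 1`:
`λ(nℓ) log(nℓ) − λ(n)λ(ℓ) log ℓ = λ(nℓ) log n`, whose absolute value is `≤ log n`
(boundedness of the twisted commutator of the Bost–Connes σ-spectral triple).
(b) If `λ(n) = −1` then the quantities `|λ(nℓ) log(nℓ) − λ(ℓ) log ℓ|` are unbounded
in `ℓ` (unboundedness of the ordinary commutator `[D, μ_n]`). -/
theorem bostConnes_twisted_commutator (n : ℕ) (hn : 1 ≤ n) :
    (∀ ℓ : ℕ, 1 ≤ ℓ →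
      ((-1 : ℝ) ^ (cardFactors (n * ℓ)) * Real.log ((n : ℝ) * ℓ) -
          (-1 : ℝ) ^ (cardFactors n) * (-1 : ℝ) ^ (cardFactors ℓ) * Real.log (ℓ : ℝ) =
        (-1 : ℝ) ^ (cardFactors (n * ℓ)) * Real.log (n : ℝ)) ∧
      |(-1 : ℝ) ^ (cardFactors (n * ℓ)) * Real.log ((n : ℝ) * ℓ) -
          (-1 : ℝ) ^ (cardFactors n) * (-1 : ℝ) ^ (cardFactors ℓ) * Real.log (ℓ : ℝ)| ≤
        Real.log (n : ℝ)) ∧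
    (((-1 : ℝ) ^ (cardFactors n) = -1) → ∀ C : ℝ, ∃ ℓ : ℕ, 1 ≤ ℓ ∧
      |(-1 : ℝ) ^ (cardFactors (n * ℓ)) * Real.log ((n : ℝ) * ℓ) -
          (-1 : ℝ) ^ (cardFactors ℓ) * Real.log (ℓ : ℝ)| > C) := by
  have hn0 : n ≠ 0 := by omega
  have hlogn : (0:ℝ) ≤ Real.log n := Real.log_natCast_nonneg n
  constructor
  · intro ℓ hℓ
    have hℓ0 : ℓ ≠ 0 := by omega
    have hΩ : Ω (n * ℓ) = Ω n + Ω ℓ := cardFactors_mul hn0 hℓ0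
    have hsgn : (-1 : ℝ) ^ (Ω (n * ℓ)) = (-1 : ℝ) ^ (Ω n) * (-1 : ℝ) ^ (Ω ℓ) := by
      rw [hΩ, pow_add]
    have hlog : Real.log ((n : ℝ) * ℓ) = Real.log n + Real.log ℓ := by
      rw [Real.log_mul (by exact_mod_cast hn0) (by exact_mod_cast hℓ0)]
    have heq : (-1 : ℝ) ^ (Ω (n * ℓ)) * Real.log ((n : ℝ) * ℓ) -
        (-1 : ℝ) ^ (Ω n) * (-1 : ℝ) ^ (Ω ℓ) * Real.log (ℓ : ℝ) =
        (-1 : ℝ) ^ (Ω (n * ℓ)) * Real.log (n : ℝ) := by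
      rw [hsgn, hlog]; ring
    refine ⟨heq, ?_⟩
    rw [heq, abs_mul, abs_pow, abs_neg, abs_one, one_pow, one_mul,
      abs_of_nonneg hlogn]
  · intro hlam C
    obtain ⟨ℓ, hℓ⟩ := exists_nat_gt (Real.exp C)
    have hℓ1 : 1 ≤ ℓ := by
      have := Real.exp_pos C
      by_contra h
      interval_cases ℓ <;> simp_all <;> linarith
    refine ⟨ℓ, hℓ1, ?_⟩
    have hℓ0 : ℓ ≠ 0 := by omega
    have hΩ : Ω (n * ℓ) = Ω n + Ω ℓ := cardFactors_mul hn0 hℓ0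
    have hsgn : (-1 : ℝ) ^ (Ω (n * ℓ)) = -((-1 : ℝ) ^ (Ω ℓ)) := by
      rw [hΩ, pow_add, hlam]; ring
    have hlog : Real.log ((n : ℝ) * ℓ) = Real.log n + Real.log ℓ := by
      rw [Real.log_mul (by exact_mod_cast hn0) (by exact_mod_cast hℓ0)]
    have hlogℓ : (0:ℝ) ≤ Real.log ℓ := Real.log_natCast_nonneg ℓ
    have hCℓ : C < Real.log ℓ := by
      have := Real.exp_log (show (0:ℝ) < ℓ by exact_mod_cast Nat.pos_of_ne_zero hℓ0)
      calc C = Real.log (Real.exp C) := (Real.log_exp C).symm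
        _ < Real.log ℓ := Real.log_lt_log (Real.exp_pos C) hℓ
    have : (-1 : ℝ) ^ (Ω (n * ℓ)) * Real.log ((n : ℝ) * ℓ) -
        (-1 : ℝ) ^ (Ω ℓ) * Real.log (ℓ : ℝ) =
        -((-1 : ℝ) ^ (Ω ℓ)) * (Real.log n + 2 * Real.log ℓ) := by
      rw [hsgn, hlog]; ring
    rw [this, abs_mul, abs_neg, abs_pow, abs_neg, abs_one, one_pow, one_mul,
      abs_of_nonneg (by linarith)]
    linarith
end

section
/- Let n and ℓ be coprime squarefree positive integers. Then μ(nℓ)·log(nℓ) − μ(n)·μ(ℓ)·log(ℓ) = μ(n)·μ(ℓ)·log(n); in particular its absolute value equals log(n), so the matrix entries of the twisted commutator D·μ̃_n − σ(μ̃_n)·D of the Riemann-gas σ-spectral triple are bounded. Moreover, if n is squarefree with μ(n) = −1, then for every C there exists a squarefree positive integer ℓ coprime to n with log(nℓ) − μ(n)·log(ℓ) = log(n) + 2·log(ℓ) > C; that is, the matrix entries of |D|·μ̃_n − σ(μ̃_n)·|D| are unbounded, so Lipschitz regularity fails. -/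
open ArithmeticFunction

/-- For coprime squarefree positive `n, ℓ`:
`μ(nℓ) log(nℓ) − μ(n)μ(ℓ) log ℓ = μ(n)μ(ℓ) log n`, with absolute value `log n`
(boundedness of the twisted commutator of the Riemann-gas σ-spectral triple).
Moreover, if `n` is squarefree with `μ(n) = −1`, the quantities
`log(nℓ) − μ(n) log ℓ = log n + 2 log ℓ` are unbounded over squarefree `ℓ` coprime
to `n`, so Lipschitz regularity fails. -/
theorem riemannGas_twisted_commutator :
    (∀ n ℓ : ℕ, 0 < n → 0 < ℓ → Squarefree n → Squarefree ℓ → Nat.Coprime n ℓ →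
      ((moebius (n * ℓ) : ℝ) * Real.log ((n : ℝ) * ℓ) -
          (moebius n : ℝ) * (moebius ℓ : ℝ) * Real.log (ℓ : ℝ) =
        (moebius n : ℝ) * (moebius ℓ : ℝ) * Real.log (n : ℝ)) ∧
      |(moebius (n * ℓ) : ℝ) * Real.log ((n : ℝ) * ℓ) -
          (moebius n : ℝ) * (moebius ℓ : ℝ) * Real.log (ℓ : ℝ)| = Real.log (n : ℝ)) ∧
    (∀ n : ℕ, 0 < n → Squarefree n → moebius n = -1 → ∀ C : ℝ,
      ∃ ℓ : ℕ, 0 < ℓ ∧ Squarefree ℓ ∧ Nat.Coprime n ℓ ∧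
        Real.log ((n : ℝ) * ℓ) - (moebius n : ℝ) * Real.log (ℓ : ℝ) =
          Real.log (n : ℝ) + 2 * Real.log (ℓ : ℝ) ∧
        Real.log (n : ℝ) + 2 * Real.log (ℓ : ℝ) > C) := by
  constructor
  · intro n ℓ hn hℓ hsn hsℓ hco
    have hmul : (moebius (n * ℓ) : ℤ) = moebius n * moebius ℓ :=
      isMultiplicative_moebius.map_mul_of_coprime hco
    have hlog : Real.log ((n : ℝ) * ℓ) = Real.log n + Real.log ℓ :=
      Real.log_mul (by positivity) (by positivity)
    have key : ((moebius (n * ℓ) : ℝ) * Real.log ((n : ℝ) * ℓ) -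
          (moebius n : ℝ) * (moebius ℓ : ℝ) * Real.log (ℓ : ℝ) =
        (moebius n : ℝ) * (moebius ℓ : ℝ) * Real.log (n : ℝ)) := by
      rw [hlog]
      have : (moebius (n * ℓ) : ℝ) = (moebius n : ℝ) * (moebius ℓ : ℝ) := by
        exact_mod_cast hmul
      rw [this]; ring
    refine ⟨key, ?_⟩
    rw [key]
    have h1 : (moebius n : ℤ) = 1 ∨ (moebius n : ℤ) = -1 :=
      Int.isUnit_iff.mp (IsUnit.of_mul_eq_one _
        (by rw [← sq]; exact moebius_sq_eq_one_of_squarefree hsn))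
    have h2 : (moebius ℓ : ℤ) = 1 ∨ (moebius ℓ : ℤ) = -1 :=
      Int.isUnit_iff.mp (IsUnit.of_mul_eq_one _
        (by rw [← sq]; exact moebius_sq_eq_one_of_squarefree hsℓ))
    have hln : 0 ≤ Real.log (n : ℝ) := Real.log_natCast_nonneg n
    rcases h1 with h1 | h1 <;> rcases h2 with h2 | h2 <;>
      rw [h1, h2] <;> push_cast <;>
      simp [abs_of_nonneg, hln, abs_of_nonpos, neg_nonpos.mpr hln]
  · intro n hn hsn hμ C
    obtain ⟨p, hpgt, hp⟩ := Nat.exists_infinite_primes (max n ⌈Real.exp C⌉₊ + 1)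
    have hpn : n < p := lt_of_lt_of_le (Nat.lt_succ_of_le (le_max_left _ _)) hpgt
    have hpe : Real.exp C < (p : ℝ) := by
      have : (⌈Real.exp C⌉₊ : ℝ) < p := by
        exact_mod_cast lt_of_lt_of_le (Nat.lt_succ_of_le (le_max_right _ _)) hpgt
      exact lt_of_le_of_lt (Nat.le_ceil _) this
    have hlogp : C < Real.log p := by
      rw [← Real.log_exp C]
      exact Real.log_lt_log (Real.exp_pos C) hpe
    have hlogp0 : 0 < Real.log p := Real.log_pos (by exact_mod_cast hp.one_lt)
    have hln : 0 ≤ Real.log (n : ℝ) := Real.log_natCast_nonneg n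
    refine ⟨p, hp.pos, hp.prime.squarefree, ?_, ?_, by nlinarith⟩
    · exact ((hp.coprime_iff_not_dvd).mpr
        (fun h => absurd (Nat.le_of_dvd hn h) (not_le.mpr hpn))).symm
    · rw [Real.log_mul (by exact_mod_cast hn.ne') (by exact_mod_cast hp.pos.ne'), hμ]
      push_cast
      ring
end
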